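/- For any probability weight vector w and any γ > 0, the log-normal sum left-tail probability satisfies P(1ᵀ exp(Y) ≤ γ) ≤ exp(−(wᵀν − ln γ − wᵀ ln w)² / (2 wᵀΣw)), whenever wᵀν − ln γ − wᵀ ln w ≥ 0. -/

import Mathlib

open MeasureTheory ProbabilityTheory Matrix

open Real
open scoped ENNReal NNReal

lemma gaussian_mgf_aux (t : ℝ) :
    Integrable (fun x => Real.exp (t * x)) (gaussianReal 0 1) ∧
    ∫ x, Real.exp (t * x) ∂(gaussianReal 0 1) = Real.exp (t ^ 2 / 2) := by
  have h2π : (0:ℝ) < Real.sqrt (2 * π) := Real.sqrt_pos.2 (by positivity)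
  have hkey : ∀ x : ℝ, gaussianPDFReal 0 1 x * Real.exp (t * x)
      = Real.exp (t ^ 2 / 2) * ((Real.sqrt (2 * π))⁻¹ * Real.exp (-(1/2) * (x - t) ^ 2)) := by
    intro x
    have h : -(x - 0) ^ 2 / 2 + t * x = t ^ 2 / 2 + -(1/2) * (x - t) ^ 2 := by ring
    simp only [gaussianPDFReal, NNReal.coe_one, mul_one]
    rw [mul_assoc, ← Real.exp_add, h, Real.exp_add]
    ring
  have hint : Integrable (fun x : ℝ =>
      Real.exp (t ^ 2 / 2) * ((Real.sqrt (2 * π))⁻¹ * Real.exp (-(1/2) * (x - t) ^ 2))) volume := by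
    have h := (integrable_exp_neg_mul_sq (by norm_num : (0:ℝ) < 1/2)).comp_sub_right t
    exact (h.const_mul _).const_mul _
  have hval : (∫ x : ℝ, Real.exp (t ^ 2 / 2) *
      ((Real.sqrt (2 * π))⁻¹ * Real.exp (-(1/2) * (x - t) ^ 2))) = Real.exp (t ^ 2 / 2) := by
    rw [integral_const_mul, integral_const_mul,
      integral_sub_right_eq_self (fun x => Real.exp (-(1/2) * x ^ 2)) t,
      integral_gaussian, show π / (1/2 : ℝ) = 2 * π by ring,
      inv_mul_cancel₀ h2π.ne', mul_one]
  have hd : gaussianReal 0 1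
      = volume.withDensity (fun x => ((gaussianPDFReal 0 1 x).toNNReal : ℝ≥0∞)) := by
    rw [gaussianReal_of_var_ne_zero _ one_ne_zero]; rfl
  have hmeas : Measurable fun x => (gaussianPDFReal 0 1 x).toNNReal :=
    (measurable_gaussianPDFReal 0 1).real_toNNReal
  have heq : ∀ x : ℝ, (gaussianPDFReal 0 1 x).toNNReal • Real.exp (t * x)
      = Real.exp (t ^ 2 / 2) * ((Real.sqrt (2 * π))⁻¹ * Real.exp (-(1/2) * (x - t) ^ 2)) := by
    intro x
    rw [NNReal.smul_def, smul_eq_mul, Real.coe_toNNReal _ (gaussianPDFReal_nonneg _ _ _), hkey]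
  constructor
  · rw [hd, integrable_withDensity_iff_integrable_smul hmeas]
    exact hint.congr (Filter.Eventually.of_forall fun x => (heq x).symm)
  · rw [hd, integral_withDensity_eq_integral_smul hmeas]
    calc (∫ x : ℝ, (gaussianPDFReal 0 1 x).toNNReal • Real.exp (t * x))
        = ∫ x : ℝ, Real.exp (t ^ 2 / 2) *
            ((Real.sqrt (2 * π))⁻¹ * Real.exp (-(1/2) * (x - t) ^ 2)) :=
          integral_congr_ae (Filter.Eventually.of_forall heq)
      _ = Real.exp (t ^ 2 / 2) := hval

lemma pi_gaussian_mgf {d : ℕ} (c : Fin d → ℝ) :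
    Integrable (fun z : Fin d → ℝ => Real.exp (∑ i, c i * z i))
      (Measure.pi fun _ : Fin d => gaussianReal 0 1) ∧
    ∫ z, Real.exp (∑ i, c i * z i) ∂(Measure.pi fun _ : Fin d => gaussianReal 0 1)
      = Real.exp ((∑ i, c i ^ 2) / 2) := by
  letI : MeasureSpace ℝ := ⟨gaussianReal 0 1⟩
  haveI : SigmaFinite (volume : Measure ℝ) := inferInstanceAs (SigmaFinite (gaussianReal 0 1))
  have hμ : (Measure.pi fun _ : Fin d => gaussianReal 0 1) = (volume : Measure (Fin d → ℝ)) :=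
    (volume_pi).symm
  have hexp : ∀ z : Fin d → ℝ, Real.exp (∑ i, c i * z i) = ∏ i, Real.exp (c i * z i) :=
    fun z => Real.exp_sum _ _
  constructor
  · rw [hμ]
    have := Integrable.fintype_prod (f := fun (i : Fin d) (x : ℝ) => Real.exp (c i * x))
      (fun i => (gaussian_mgf_aux (c i)).1)
    exact this.congr (Filter.Eventually.of_forall fun z => (hexp z).symm)
  · rw [hμ]
    calc (∫ z : Fin d → ℝ, Real.exp (∑ i, c i * z i))
        = ∫ z : Fin d → ℝ, ∏ i, Real.exp (c i * z i) :=
          integral_congr_ae (Filter.Eventually.of_forall hexp)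
      _ = ∏ i, ∫ x : ℝ, Real.exp (c i * x) :=
          integral_fintype_prod_eq_prod (fun i x => Real.exp (c i * x))
      _ = ∏ i, Real.exp (c i ^ 2 / 2) := by
          exact Finset.prod_congr rfl fun i _ => (gaussian_mgf_aux (c i)).2
      _ = Real.exp ((∑ i, c i ^ 2) / 2) := by
          rw [← Real.exp_sum, Finset.sum_div]

/-- Chernoff-type bound for the left tail of a sum of dependent
log-normals: `P(1ᵀ exp(Y) ≤ γ) ≤ exp(−(wᵀν − ln γ − wᵀ ln w)²/(2 wᵀ Σ w))`
whenever `wᵀν − ln γ − wᵀ ln w ≥ 0`, where `Y ~ N(ν, Σ)` with `Σ = L Lᵀ`. -/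
theorem sln_left_tail_chernoff_bound {d : ℕ}
    (L : Matrix (Fin d) (Fin d) ℝ) (ν : Fin d → ℝ)
    (hpos : (L * Lᵀ).PosDef)
    (w : Fin d → ℝ) (hw0 : ∀ i, 0 ≤ w i) (hw1 : ∑ i, w i = 1)
    (γ : ℝ) (hγ : 0 < γ)
    (hnum : 0 ≤ ∑ i, w i * ν i - Real.log γ - ∑ i, w i * Real.log (w i)) :
    (((Measure.pi fun _ : Fin d => gaussianReal 0 1).map
        (fun z => ν + L.mulVec z)) {y | ∑ i, Real.exp (y i) ≤ γ}).toReal ≤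
      Real.exp (-(∑ i, w i * ν i - Real.log γ - ∑ i, w i * Real.log (w i)) ^ 2 /
        (2 * (w ⬝ᵥ (L * Lᵀ).mulVec w))) := by
  classical
  set μ : Measure (Fin d → ℝ) := Measure.pi fun _ : Fin d => gaussianReal 0 1 with hμdef
  haveI : IsProbabilityMeasure μ := by rw [hμdef]; infer_instance
  have hw_ne : w ≠ 0 := by
    intro h
    rw [h] at hw1
    simp at hw1
  have hσpos : 0 < w ⬝ᵥ (L * Lᵀ).mulVec w := by
    have := hpos.dotProduct_mulVec_pos hw_ne
    simpa using this
  set u : Fin d → ℝ := w ᵥ* L with hu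
  have hσ : w ⬝ᵥ (L * Lᵀ).mulVec w = ∑ j, u j ^ 2 := by
    rw [← Matrix.mulVec_mulVec, Matrix.dotProduct_mulVec, Matrix.mulVec_transpose]
    simp [dotProduct, sq, hu]
  set σ2 : ℝ := ∑ j, u j ^ 2 with hσ2def
  have hσ2pos : 0 < σ2 := hσ ▸ hσpos
  set m : ℝ := ∑ i, w i * ν i with hm
  set c₀ : ℝ := Real.log γ + ∑ i, w i * Real.log (w i) with hc₀
  have hnum' : 0 ≤ m - c₀ := by rw [hm, hc₀]; linarith
  set s : ℝ := (m - c₀) / σ2 with hs_def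
  have hs : 0 ≤ s := div_nonneg hnum' hσ2pos.le
  set f : (Fin d → ℝ) → ℝ := fun z => Real.exp (s * (c₀ - (m + u ⬝ᵥ z))) with hf
  have hTmeas : Measurable fun z : Fin d → ℝ => ν + L.mulVec z := by
    have h1 : Continuous fun z : Fin d → ℝ => L.mulVec z := by
      simpa [Matrix.coe_mulVecLin] using (Matrix.mulVecLin L).continuous_of_finiteDimensional
    exact (continuous_const.add h1).measurable
  have hSmeas : MeasurableSet {y : Fin d → ℝ | ∑ i, Real.exp (y i) ≤ γ} := by
    apply measurableSet_le _ measurable_const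
    exact Finset.measurable_sum _ fun i _ => Real.measurable_exp.comp (measurable_pi_apply i)
  rw [Measure.map_apply hTmeas hSmeas]
  have hsub : (fun z => ν + L.mulVec z) ⁻¹' {y | ∑ i, Real.exp (y i) ≤ γ}
      ⊆ {z | (1:ℝ) ≤ f z} := by
    intro z hz
    simp only [Set.mem_preimage, Set.mem_setOf_eq] at hz
    have hzy : ∑ i, Real.exp (ν i + L.mulVec z i) ≤ γ := by
      simpa [Pi.add_apply] using hz
    set y : Fin d → ℝ := fun i => ν i + L.mulVec z i with hy
    have hj : Real.exp (∑ i, w i * (y i - Real.log (w i)))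
        ≤ ∑ i, w i * Real.exp (y i - Real.log (w i)) := by
      have := convexOn_exp.map_sum_le (t := Finset.univ) (w := w)
        (p := fun i => y i - Real.log (w i)) (fun i _ => hw0 i) hw1 (fun i _ => Set.mem_univ _)
      simpa [smul_eq_mul] using this
    have hterm : ∀ i, w i * Real.exp (y i - Real.log (w i)) ≤ Real.exp (y i) := by
      intro i
      rcases eq_or_lt_of_le (hw0 i) with h0 | h0
      · rw [← h0, zero_mul]
        exact (Real.exp_pos _).le
      · rw [Real.exp_sub, Real.exp_log h0, mul_div_cancel₀ _ h0.ne']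
    have h2 : ∑ i, w i * Real.exp (y i - Real.log (w i)) ≤ γ :=
      le_trans (Finset.sum_le_sum fun i _ => hterm i) hzy
    have h3 : ∑ i, w i * (y i - Real.log (w i)) ≤ Real.log γ :=
      (Real.le_log_iff_exp_le hγ).2 (hj.trans h2)
    have hsplit : ∑ i, w i * (y i - Real.log (w i))
        = ∑ i, w i * y i - ∑ i, w i * Real.log (w i) := by
      rw [← Finset.sum_sub_distrib]
      exact Finset.sum_congr rfl fun i _ => by ring
    have h4 : ∑ i, w i * y i ≤ c₀ := by
      rw [hsplit] at h3
      rw [hc₀]; linarith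
    have h5 : m + u ⬝ᵥ z = ∑ i, w i * y i := by
      have hdp : u ⬝ᵥ z = ∑ i, w i * (L.mulVec z) i := by
        rw [hu, ← Matrix.dotProduct_mulVec]
        rfl
      rw [hm, hdp, hy]
      simp only [mul_add]
      rw [Finset.sum_add_distrib]
    show (1:ℝ) ≤ f z
    simp only [hf]
    apply Real.one_le_exp
    apply mul_nonneg hs
    linarith [h4, h5]
  have hrw : ∀ z : Fin d → ℝ,
      f z = Real.exp (s * (c₀ - m)) * Real.exp (∑ i, (-s * u i) * z i) := by
    intro z
    simp only [hf]
    rw [← Real.exp_add]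
    congr 1
    have h6 : ∑ i, (-s * u i) * z i = -s * ∑ i, u i * z i := by
      rw [Finset.mul_sum]
      exact Finset.sum_congr rfl fun i _ => by ring
    have hdp : u ⬝ᵥ z = ∑ i, u i * z i := rfl
    rw [h6, hdp]
    ring
  obtain ⟨hIc, hVc⟩ := pi_gaussian_mgf (fun i => -s * u i)
  have hIf : Integrable f μ :=
    ((hIc.const_mul (Real.exp (s * (c₀ - m))))).congr
      (Filter.Eventually.of_forall fun z => (hrw z).symm)
  have hmark := mul_meas_ge_le_integral_of_nonneg
    (Filter.Eventually.of_forall fun z => (Real.exp_pos _).le : 0 ≤ᵐ[μ] f) hIf 1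
  rw [one_mul] at hmark
  have hbound : (μ {z | (1:ℝ) ≤ f z}).toReal
      ≤ Real.exp (s * (c₀ - m) + s ^ 2 * σ2 / 2) := by
    calc (μ {z | (1:ℝ) ≤ f z}).toReal ≤ ∫ z, f z ∂μ := hmark
      _ = Real.exp (s * (c₀ - m)) * ∫ z, Real.exp (∑ i, (-s * u i) * z i) ∂μ := by
          rw [← integral_const_mul]
          exact integral_congr_ae (Filter.Eventually.of_forall hrw)
      _ = Real.exp (s * (c₀ - m)) * Real.exp ((∑ i, (-s * u i) ^ 2) / 2) := by rw [hμdef, hVc]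
      _ = Real.exp (s * (c₀ - m) + s ^ 2 * σ2 / 2) := by
          rw [← Real.exp_add]
          congr 1
          have h7 : ∑ i, (-s * u i) ^ 2 = s ^ 2 * σ2 := by
            rw [hσ2def, Finset.mul_sum]
            exact Finset.sum_congr rfl fun i _ => by ring
          rw [h7]
  have hmono : (μ ((fun z => ν + L.mulVec z) ⁻¹' {y | ∑ i, Real.exp (y i) ≤ γ})).toReal
      ≤ (μ {z | (1:ℝ) ≤ f z}).toReal :=
    ENNReal.toReal_mono (measure_ne_top μ _) (measure_mono hsub)
  refine le_trans hmono (le_trans hbound (le_of_eq ?_))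
  rw [hσ]
  congr 1
  rw [hs_def, hc₀, hm]
  field_simp
  ring
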